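/- Let T be a tree on a finite nonempty vertex type V with n = |V| vertices, and let m ≥ 1 be an integer. Let G be the m-order Type-II growth graph of T. Then the Wiener index of G satisfies W(G) = (2m+1)^2·W(T) + m(2m+1)·n^2 − m(5m+3)·n + m(3m+2). -/
import Mathlib


/-- The Wiener index of a finite simple graph: half the sum of the graph
distances over all ordered pairs of vertices. -/
noncomputable def wienerIndex {V : Type*} [Fintype V] (G : SimpleGraph V) : ℚ :=
  (∑ u : V, ∑ v : V, (G.dist u v : ℚ)) / 2

/-- The `m`-order Type-II growth graph of `T`:
attach `m * deg_T u` new pendant leaves to every vertex `u` of `T`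
(one group of `m` leaves for each dart with tail `u`). -/
def typeIIGrowth {V : Type*} (T : SimpleGraph V) (m : ℕ) :
    SimpleGraph (V ⊕ (T.Dart × Fin m)) :=
  SimpleGraph.fromRel (fun x y =>
    match x, y with
    | Sum.inl u, Sum.inl v => T.Adj u v
    | Sum.inl u, Sum.inr (d, _) => d.fst = u
    | _, _ => False)

open SimpleGraph

section Tree
variable {V : Type*} {T : SimpleGraph V}

lemma tree_path_length_eq_dist (hT : T.IsTree) {u v : V} (p : T.Walk u v) (hp : p.IsPath) :
    p.length = T.dist u v := by
  classical
  refine le_antisymm ?_ (SimpleGraph.dist_le p)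
  obtain ⟨q, hq⟩ := hT.isConnected.exists_walk_length_eq_dist u v
  have := (hT.existsUnique_path u v).unique hp q.bypass_isPath
  calc p.length = q.bypass.length := by rw [this]
    _ ≤ q.length := q.length_bypass_le
    _ = T.dist u v := hq

/-- In a tree the distances from `u` to two adjacent vertices differ by exactly one. -/
lemma tree_adj_dist (hT : T.IsTree) {a b : V} (h : T.Adj a b) (u : V) :
    T.dist u b = T.dist u a + 1 ∨ T.dist u a = T.dist u b + 1 := by
  classical
  obtain ⟨p, hp, -⟩ := hT.existsUnique_path u a
  by_cases hb : b ∈ p.support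
  · right
    have h1 : (p.takeUntil b hb).length = T.dist u b :=
      tree_path_length_eq_dist hT _ (hp.takeUntil hb)
    have h2 : (p.dropUntil b hb).length = 1 := by
      have hedge : (SimpleGraph.Walk.cons h.symm SimpleGraph.Walk.nil : T.Walk b a).IsPath := by
        simp [h.ne']
      have := (hT.existsUnique_path b a).unique (hp.dropUntil hb) hedge
      rw [this]; rfl
    have h3 : p.length = T.dist u a := tree_path_length_eq_dist hT p hp
    have := congrArg SimpleGraph.Walk.length (p.take_spec hb)
    rw [SimpleGraph.Walk.length_append, h1, h2, h3] at this
    omega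
  · left
    have hq : (SimpleGraph.Walk.cons h.symm p.reverse : T.Walk b u).reverse.IsPath := by
      refine (hp.reverse.cons ?_).reverse
      simpa using hb
    have := tree_path_length_eq_dist hT _ hq
    rw [SimpleGraph.Walk.length_reverse] at this
    simp only [SimpleGraph.Walk.length_cons, SimpleGraph.Walk.length_reverse] at this
    have h3 : p.length = T.dist u a := tree_path_length_eq_dist hT p hp
    omega

/-- predecessor: every vertex `x ≠ u` has a neighbor closer to `u`. -/
lemma tree_exists_pred (hT : T.IsTree) {u x : V} (hx : x ≠ u) :
    ∃ p, T.Adj p x ∧ T.dist u p + 1 = T.dist u x := by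
  obtain ⟨w, hw⟩ := hT.isConnected.exists_walk_length_eq_dist x u
  have hpos : 0 < w.length := by
    rw [hw]; exact hT.isConnected.pos_dist_of_ne hx
  cases w with
  | nil => simp at hpos
  | @cons _ z _ h' q =>
    refine ⟨z, h'.symm, ?_⟩
    have h1 : T.dist u z ≤ q.length := by
      rw [SimpleGraph.dist_comm]; exact SimpleGraph.dist_le q
    have h2 : T.dist u x ≤ T.dist u z + 1 := by
      calc T.dist u x ≤ T.dist u z + T.dist z x := hT.isConnected.dist_triangle
        _ ≤ T.dist u z + 1 := by
            have := SimpleGraph.dist_le (SimpleGraph.Walk.cons h'.symm SimpleGraph.Walk.nil : T.Walk z x)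
            simp at this
            omega
    have h3 : q.length + 1 = T.dist x u := by simpa using hw
    rw [SimpleGraph.dist_comm (G := T) (u := x) (v := u)] at h3
    omega

section DartSum
variable [Fintype V] [DecidableRel T.Adj]

lemma tree_dart_sum (hT : T.IsTree) (u : V) :
    ∑ d : T.Dart, (T.dist u d.fst : ℚ)
      = 2 * (∑ x : V, (T.dist u x : ℚ)) - ((Fintype.card V : ℚ) - 1) := by
  classical
  -- the far endpoint map
  have key : ∀ d : T.Dart, T.dist u d.fst < T.dist u d.snd →
      T.dist u d.snd = T.dist u d.fst + 1 := by
    intro d hlt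
    rcases tree_adj_dist hT d.adj u with h | h
    · omega
    · omega
  have key' : ∀ d : T.Dart, ¬ T.dist u d.fst < T.dist u d.snd →
      T.dist u d.fst = T.dist u d.snd + 1 := by
    intro d hlt
    rcases tree_adj_dist hT d.adj u with h | h
    · omega
    · omega
  set F : T.Dart → {x : V // x ≠ u} × Bool := fun d =>
    if h : T.dist u d.fst < T.dist u d.snd then
      (⟨d.snd, fun he => by rw [he, SimpleGraph.dist_self] at h; exact Nat.not_lt_zero _ h⟩, false)
    else
      (⟨d.fst, fun he => by have := key' d h; rw [he, SimpleGraph.dist_self] at this; exact Nat.succ_ne_zero _ this.symm⟩, true)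
    with hF
  have hcard : Fintype.card T.Dart = Fintype.card ({x : V // x ≠ u} × Bool) := by
    have h1 : Fintype.card T.Dart = 2 * T.edgeFinset.card :=
      T.dart_card_eq_twice_card_edges
    have h2 : T.edgeFinset.card + 1 = Fintype.card V := hT.card_edgeFinset
    have h3 : Fintype.card {x : V // x ≠ u} = Fintype.card V - 1 := by
      have := Fintype.card_subtype_compl (fun x : V => x = u)
      simpa [Fintype.card_subtype_eq] using this
    rw [Fintype.card_prod, h3, Fintype.card_bool]
    omega
  have hsurj : Function.Surjective F := by
    rintro ⟨⟨x, hx⟩, b⟩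
    obtain ⟨p, hp, hd⟩ := tree_exists_pred hT hx
    cases b
    · refine ⟨⟨(p, x), hp⟩, ?_⟩
      have hlt : T.dist u (p, x).1 < T.dist u (p, x).2 := by simp; omega
      simp only [hF, dif_pos hlt]
    · refine ⟨⟨(x, p), hp.symm⟩, ?_⟩
      have hlt : ¬ T.dist u (x, p).1 < T.dist u (x, p).2 := by simp; omega
      simp only [hF, dif_neg hlt]
  have hbij : Function.Bijective F :=
    (Fintype.bijective_iff_surjective_and_card F).2 ⟨hsurj, hcard⟩
  have htrans : ∑ d : T.Dart, (T.dist u d.fst : ℚ)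
      = ∑ y : {x : V // x ≠ u} × Bool,
          (if y.2 then (T.dist u y.1.val : ℚ) else (T.dist u y.1.val : ℚ) - 1) := by
    refine Fintype.sum_bijective F hbij _ _ ?_
    intro d
    by_cases h : T.dist u d.fst < T.dist u d.snd
    · simp only [hF, dif_pos h]
      have := key d h
      rw [this]
      push_cast
      ring
    · simp only [hF, dif_neg h]; simp
  rw [htrans, Fintype.sum_prod_type]
  have hbool : ∀ x : {x : V // x ≠ u},
      (∑ b : Bool, (if b then (T.dist u x.val : ℚ) else (T.dist u x.val : ℚ) - 1))
        = 2 * (T.dist u x.val : ℚ) - 1 := by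
    intro x; simp only [Fintype.sum_bool]; simp; ring
  have h3 : (Fintype.card {x : V // x ≠ u} : ℚ) = (Fintype.card V : ℚ) - 1 := by
    have := Fintype.card_subtype_compl (fun x : V => x = u)
    simp only [Fintype.card_subtype_eq] at this
    have hpos : 1 ≤ Fintype.card V := Fintype.card_pos_iff.mpr ⟨u⟩
    have h4 : Fintype.card {x : V // x ≠ u} = Fintype.card V - 1 := this
    rw [h4, Nat.cast_sub hpos]
    simp
  have hsub : ∑ x : {x : V // x ≠ u}, (T.dist u x.val : ℚ) = ∑ x : V, (T.dist u x : ℚ) := by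
    rw [← Finset.sum_subtype (Finset.univ.erase u) (by simp) (fun x => (T.dist u x : ℚ))]
    have := Finset.add_sum_erase Finset.univ (fun x => (T.dist u x : ℚ)) (Finset.mem_univ u)
    simp only [SimpleGraph.dist_self, Nat.cast_zero, zero_add] at this
    linarith [this]
  calc ∑ x : {x : V // x ≠ u}, (∑ b : Bool,
          (if b then (T.dist u x.val : ℚ) else (T.dist u x.val : ℚ) - 1))
      = ∑ x : {x : V // x ≠ u}, (2 * (T.dist u x.val : ℚ) - 1) :=
        Finset.sum_congr rfl (fun x _ => hbool x)
    _ = 2 * (∑ x : {x : V // x ≠ u}, (T.dist u x.val : ℚ)) - (Fintype.card {x : V // x ≠ u} : ℚ) := by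
        rw [Finset.sum_sub_distrib, ← Finset.mul_sum]
        simp [Finset.card_univ]
    _ = 2 * (∑ x : V, (T.dist u x : ℚ)) - ((Fintype.card V : ℚ) - 1) := by
        rw [hsub, h3]

end DartSum
end Tree

section Growth
variable {V : Type*} {T : SimpleGraph V} {m : ℕ}

/-- projection back to the tree -/
def growthProj (T : SimpleGraph V) (m : ℕ) : V ⊕ (T.Dart × Fin m) → V :=
  Sum.elim id (fun p => p.1.fst)

lemma growth_adj_inl_inl {u v : V} :
    (typeIIGrowth T m).Adj (Sum.inl u) (Sum.inl v) ↔ T.Adj u v := by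
  rw [typeIIGrowth, SimpleGraph.fromRel_adj]
  constructor
  · rintro ⟨h1, h2 | h2⟩
    · exact h2
    · exact h2.symm
  · intro h
    exact ⟨by simp [h.ne], Or.inl h⟩

lemma growth_adj_inl_inr {u : V} {d : T.Dart} {i : Fin m} :
    (typeIIGrowth T m).Adj (Sum.inl u) (Sum.inr (d, i)) ↔ d.fst = u := by
  rw [typeIIGrowth, SimpleGraph.fromRel_adj]
  constructor
  · rintro ⟨h1, h2 | h2⟩
    · exact h2
    · exact h2.elim
  · intro h
    exact ⟨by simp, Or.inl h⟩

lemma growth_adj_inr {d : T.Dart} {i : Fin m} {y : V ⊕ (T.Dart × Fin m)} :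
    (typeIIGrowth T m).Adj (Sum.inr (d, i)) y ↔ y = Sum.inl d.fst := by
  cases y with
  | inl v =>
    rw [← SimpleGraph.adj_comm, growth_adj_inl_inr]
    simp [eq_comm]
  | inr p =>
    rw [typeIIGrowth, SimpleGraph.fromRel_adj]
    obtain ⟨e, j⟩ := p
    simp

/-- the inclusion of `T` -/
def growthHom (T : SimpleGraph V) (m : ℕ) : T →g typeIIGrowth T m where
  toFun := Sum.inl
  map_rel' := fun h => growth_adj_inl_inl.mpr h

lemma growth_connected (hc : T.Connected) : (typeIIGrowth T m).Connected := by
  have hne : Nonempty V := hc.nonempty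
  obtain ⟨v0⟩ := hne
  have hreach : ∀ x : V ⊕ (T.Dart × Fin m),
      (typeIIGrowth T m).Reachable x (Sum.inl v0) := by
    intro x
    have hinl : ∀ u : V, (typeIIGrowth T m).Reachable (Sum.inl u) (Sum.inl v0) := by
      intro u
      obtain ⟨p⟩ := hc u v0
      exact ⟨p.map (growthHom T m)⟩
    cases x with
    | inl u => exact hinl u
    | inr p =>
      obtain ⟨d, i⟩ := p
      exact (SimpleGraph.Adj.reachable (growth_adj_inr.mpr rfl)).trans (hinl d.fst)
  have : Nonempty (V ⊕ (T.Dart × Fin m)) := ⟨Sum.inl v0⟩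
  exact SimpleGraph.Connected.mk (fun x y => (hreach x).trans (hreach y).symm)

lemma growth_adj_proj {x y : V ⊕ (T.Dart × Fin m)} (h : (typeIIGrowth T m).Adj x y) :
    T.Adj (growthProj T m x) (growthProj T m y) ∨ growthProj T m x = growthProj T m y := by
  cases x with
  | inl u =>
    cases y with
    | inl v => exact Or.inl (growth_adj_inl_inl.mp h)
    | inr p =>
      obtain ⟨d, i⟩ := p
      right
      have := growth_adj_inl_inr.mp h
      simp [growthProj, this]
  | inr p =>
    obtain ⟨d, i⟩ := p
    have := growth_adj_inr.mp h
    subst this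
    right
    simp [growthProj]

lemma growth_proj_dist_le (hc : T.Connected) {x y : V ⊕ (T.Dart × Fin m)}
    (p : (typeIIGrowth T m).Walk x y) :
    T.dist (growthProj T m x) (growthProj T m y) ≤ p.length := by
  induction p with
  | nil => simp
  | cons h q ih =>
    rename_i a b c
    rcases growth_adj_proj h with h' | h'
    · calc T.dist (growthProj T m a) (growthProj T m c)
          ≤ T.dist (growthProj T m a) (growthProj T m b)
            + T.dist (growthProj T m b) (growthProj T m c) := hc.dist_triangle
        _ ≤ 1 + q.length := by
            have h1 : T.dist (growthProj T m a) (growthProj T m b) ≤ 1 :=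
              SimpleGraph.dist_le (SimpleGraph.Walk.cons h' SimpleGraph.Walk.nil)
            omega
        _ = (SimpleGraph.Walk.cons h q).length := by simp [Nat.add_comm]
    · rw [h']
      calc T.dist (growthProj T m b) (growthProj T m c) ≤ q.length := ih
        _ ≤ (SimpleGraph.Walk.cons h q).length := by simp

lemma growth_dist_inl_inl (hc : T.Connected) (u v : V) :
    (typeIIGrowth T m).dist (Sum.inl u) (Sum.inl v) = T.dist u v := by
  refine le_antisymm ?_ ?_
  · obtain ⟨p, hp⟩ := hc.exists_walk_length_eq_dist u v
    calc (typeIIGrowth T m).dist (Sum.inl u) (Sum.inl v)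
        ≤ (p.map (growthHom T m)).length := SimpleGraph.dist_le _
      _ = T.dist u v := by rw [SimpleGraph.Walk.length_map]; exact hp
  · obtain ⟨p, hp⟩ := (growth_connected hc).exists_walk_length_eq_dist
      (Sum.inl u) (Sum.inl v)
    have := growth_proj_dist_le hc p
    simpa [growthProj, hp] using this

lemma growth_dist_inr (hc : T.Connected) (x : V ⊕ (T.Dart × Fin m)) (d : T.Dart) (i : Fin m)
    (hne : x ≠ Sum.inr (d, i)) :
    (typeIIGrowth T m).dist x (Sum.inr (d, i))
      = (typeIIGrowth T m).dist x (Sum.inl d.fst) + 1 := by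
  have hG := growth_connected (m := m) hc
  refine le_antisymm ?_ ?_
  · calc (typeIIGrowth T m).dist x (Sum.inr (d, i))
        ≤ (typeIIGrowth T m).dist x (Sum.inl d.fst)
          + (typeIIGrowth T m).dist (Sum.inl d.fst) (Sum.inr (d, i)) := hG.dist_triangle
      _ ≤ (typeIIGrowth T m).dist x (Sum.inl d.fst) + 1 := by
          have : (typeIIGrowth T m).dist (Sum.inl d.fst) (Sum.inr (d, i)) ≤ 1 :=
            SimpleGraph.dist_le
              (SimpleGraph.Walk.cons (growth_adj_inl_inr.mpr rfl) SimpleGraph.Walk.nil)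
          omega
  · obtain ⟨p, hp⟩ := hG.exists_walk_length_eq_dist (Sum.inr (d, i)) x
    have hpos : 0 < p.length := by
      rw [hp]
      exact hG.pos_dist_of_ne (fun h => hne h.symm)
    cases p with
    | nil => simp at hpos
    | @cons _ w _ h' q =>
      have hw : w = Sum.inl d.fst := growth_adj_inr.mp h'
      subst hw
      have h1 : (typeIIGrowth T m).dist (Sum.inl d.fst) x ≤ q.length :=
        SimpleGraph.dist_le q
      have h2 : q.length + 1 = (typeIIGrowth T m).dist (Sum.inr (d, i)) x := by
        simpa using hp
      rw [SimpleGraph.dist_comm (G := typeIIGrowth T m) (u := x) (v := Sum.inr (d, i)),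
        SimpleGraph.dist_comm (G := typeIIGrowth T m) (u := x) (v := Sum.inl d.fst)]
      omega

lemma growth_dist_inl_inr (hc : T.Connected) (u : V) (d : T.Dart) (i : Fin m) :
    (typeIIGrowth T m).dist (Sum.inl u) (Sum.inr (d, i)) = T.dist u d.fst + 1 := by
  rw [growth_dist_inr hc _ d i (by simp), growth_dist_inl_inl hc]

lemma growth_dist_inr_inr (hc : T.Connected) (d e : T.Dart) (i j : Fin m)
    (hne : (d, i) ≠ (e, j)) :
    (typeIIGrowth T m).dist (Sum.inr (d, i)) (Sum.inr (e, j))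
      = T.dist d.fst e.fst + 2 := by
  rw [growth_dist_inr hc _ e j (by simp [hne]),
    SimpleGraph.dist_comm (G := typeIIGrowth T m) (u := Sum.inr (d, i)) (v := Sum.inl e.fst),
    growth_dist_inl_inr hc, SimpleGraph.dist_comm (G := T) (u := e.fst) (v := d.fst)]

end Growth


section Growth2
variable {V : Type*} {T : SimpleGraph V} {m : ℕ}

lemma growth_dist_inr_inl (hc : T.Connected) (v : V) (d : T.Dart) (i : Fin m) :
    (typeIIGrowth T m).dist (Sum.inr (d, i)) (Sum.inl v) = T.dist v d.fst + 1 := by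
  rw [SimpleGraph.dist_comm (G := typeIIGrowth T m) (u := Sum.inr (d, i)) (v := Sum.inl v),
    growth_dist_inl_inr hc]

open Classical in
lemma growth_dist_inr_inr_q (hc : T.Connected) (p q : T.Dart × Fin m) :
    ((typeIIGrowth T m).dist (Sum.inr p) (Sum.inr q) : ℚ)
      = (T.dist p.1.fst q.1.fst : ℚ) + 2 - (if p = q then 2 else 0) := by
  classical
  by_cases h : p = q
  · subst h
    simp [SimpleGraph.dist_self]
  · obtain ⟨d, i⟩ := p
    obtain ⟨e, j⟩ := q
    rw [growth_dist_inr_inr hc d e i j h, if_neg h]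
    push_cast
    ring

end Growth2

theorem wiener_typeIIGrowth {V : Type*} [Fintype V] [Nonempty V]
    (T : SimpleGraph V) [DecidableRel T.Adj] (hT : T.IsTree) (m : ℕ) (hm : 1 ≤ m) :
    wienerIndex (typeIIGrowth T m) =
      (2 * (m : ℚ) + 1) ^ 2 * wienerIndex T
        + (m : ℚ) * (2 * (m : ℚ) + 1) * (Fintype.card V : ℚ) ^ 2
        - (m : ℚ) * (5 * (m : ℚ) + 3) * (Fintype.card V : ℚ)
        + (m : ℚ) * (3 * (m : ℚ) + 2) := by
  classical
  have hc : T.Connected := hT.isConnected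
  set n : ℚ := (Fintype.card V : ℚ) with hn
  set W : ℚ := wienerIndex T with hWdef
  set DD : V → ℚ := fun u => ∑ v : V, (T.dist u v : ℚ) with hDD
  have hW : ∑ u : V, DD u = 2 * W := by
    rw [hWdef, wienerIndex]
    ring
  have key : ∀ u : V, (∑ d : T.Dart, (T.dist u d.fst : ℚ)) = 2 * DD u - (n - 1) :=
    fun u => tree_dart_sum hT u
  have hdart : (Fintype.card T.Dart : ℚ) = 2 * (n - 1) := by
    have h1 : Fintype.card T.Dart = 2 * T.edgeFinset.card :=
      T.dart_card_eq_twice_card_edges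
    have h2 : T.edgeFinset.card + 1 = Fintype.card V := hT.card_edgeFinset
    rw [h1, hn]
    push_cast
    rw [← h2]
    push_cast
    ring
  have hones : (∑ _d : T.Dart, (1 : ℚ)) = 2 * (n - 1) := by
    rw [Finset.sum_const, Finset.card_univ, nsmul_eq_mul, hdart]
    ring
  have hDDdart : (∑ d : T.Dart, DD d.fst) = 4 * W - n * (n - 1) := by
    have e1 : (∑ d : T.Dart, DD d.fst) = ∑ d : T.Dart, ∑ v : V, (T.dist v d.fst : ℚ) := by
      refine Finset.sum_congr rfl (fun d _ => ?_)
      show (∑ v : V, (T.dist d.fst v : ℚ)) = _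
      exact Finset.sum_congr rfl
        (fun v _ => by rw [SimpleGraph.dist_comm (G := T) (u := d.fst) (v := v)])
    rw [e1, Finset.sum_comm]
    rw [Finset.sum_congr rfl (fun v (_ : v ∈ Finset.univ) => key v), Finset.sum_sub_distrib,
      ← Finset.mul_sum, hW, Finset.sum_const, Finset.card_univ, nsmul_eq_mul, hn]
    ring
  have hQ : (∑ d : T.Dart, ∑ e : T.Dart, (T.dist d.fst e.fst : ℚ))
      = 8 * W - 2 * n * (n - 1) - 2 * (n - 1) ^ 2 := by
    rw [Finset.sum_congr rfl (fun (d : T.Dart) (_ : d ∈ Finset.univ) => key d.fst),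
      Finset.sum_sub_distrib, ← Finset.mul_sum, hDDdart, Finset.sum_const, Finset.card_univ,
      nsmul_eq_mul, hdart]
    ring
  have S1 : (∑ u : V, ∑ v : V, ((typeIIGrowth T m).dist (Sum.inl u) (Sum.inl v) : ℚ))
      = 2 * W := by
    simp only [growth_dist_inl_inl hc]
    exact hW
  have S2 : (∑ u : V, ∑ p : T.Dart × Fin m,
        ((typeIIGrowth T m).dist (Sum.inl u) (Sum.inr p) : ℚ))
      = (m : ℚ) * (4 * W + n * (n - 1)) := by
    have step : ∀ u : V, (∑ p : T.Dart × Fin m,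
        ((typeIIGrowth T m).dist (Sum.inl u) (Sum.inr p) : ℚ))
        = (m : ℚ) * (2 * DD u + (n - 1)) := by
      intro u
      rw [Fintype.sum_prod_type]
      have hin : ∀ d : T.Dart, (∑ i : Fin m,
          ((typeIIGrowth T m).dist (Sum.inl u) (Sum.inr (d, i)) : ℚ))
          = (m : ℚ) * ((T.dist u d.fst : ℚ) + 1) := by
        intro d
        have hv : ∀ i : Fin m, ((typeIIGrowth T m).dist (Sum.inl u) (Sum.inr (d, i)) : ℚ)
            = (T.dist u d.fst : ℚ) + 1 := by
          intro i
          rw [growth_dist_inl_inr hc]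
          push_cast
          ring
        rw [Finset.sum_congr rfl (fun i _ => hv i), Finset.sum_const, Finset.card_univ,
          Fintype.card_fin, nsmul_eq_mul]
      rw [Finset.sum_congr rfl (fun d _ => hin d), ← Finset.mul_sum, Finset.sum_add_distrib,
        key u, hones]
      ring
    rw [Finset.sum_congr rfl (fun u _ => step u), ← Finset.mul_sum, Finset.sum_add_distrib,
      ← Finset.mul_sum, hW, Finset.sum_const, Finset.card_univ, nsmul_eq_mul, hn]
    ring
  have S3 : (∑ p : T.Dart × Fin m, ∑ v : V,
        ((typeIIGrowth T m).dist (Sum.inr p) (Sum.inl v) : ℚ))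
      = (m : ℚ) * (4 * W + n * (n - 1)) := by
    rw [← S2, Finset.sum_comm]
    refine Finset.sum_congr rfl (fun u _ => Finset.sum_congr rfl (fun p _ => ?_))
    rw [SimpleGraph.dist_comm (G := typeIIGrowth T m) (u := Sum.inr p) (v := Sum.inl u)]
  have S4 : (∑ p : T.Dart × Fin m, ∑ q : T.Dart × Fin m,
        ((typeIIGrowth T m).dist (Sum.inr p) (Sum.inr q) : ℚ))
      = (m : ℚ) ^ 2 * (8 * W - 2 * n * (n - 1) - 2 * (n - 1) ^ 2)
        + 8 * (m : ℚ) ^ 2 * (n - 1) ^ 2 - 4 * (m : ℚ) * (n - 1) := by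
    have step : ∀ p q : T.Dart × Fin m,
        ((typeIIGrowth T m).dist (Sum.inr p) (Sum.inr q) : ℚ)
          = (T.dist p.1.fst q.1.fst : ℚ) + 2 - (if p = q then 2 else 0) :=
      fun p q => growth_dist_inr_inr_q hc p q
    rw [Finset.sum_congr rfl (fun p _ => Finset.sum_congr rfl (fun q _ => step p q))]
    have hcardP : ((Fintype.card (T.Dart × Fin m) : ℚ)) = 2 * (n - 1) * (m : ℚ) := by
      rw [Fintype.card_prod, Fintype.card_fin]
      push_cast
      rw [hdart]
    have hif : ∀ p : T.Dart × Fin m,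
        (∑ q : T.Dart × Fin m, (if p = q then (2 : ℚ) else 0)) = 2 := by
      intro p
      rw [Finset.sum_eq_single_of_mem p (Finset.mem_univ p)
        (fun q _ hq => if_neg (fun he => hq he.symm)), if_pos rfl]
    have inner : ∀ d : T.Dart, (∑ q : T.Dart × Fin m, (T.dist d.fst q.1.fst : ℚ))
        = (m : ℚ) * (∑ e : T.Dart, (T.dist d.fst e.fst : ℚ)) := by
      intro d
      rw [Fintype.sum_prod_type]
      have h1 : ∀ e : T.Dart, (∑ _i : Fin m, (T.dist d.fst e.fst : ℚ))
          = (m : ℚ) * (T.dist d.fst e.fst : ℚ) := by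
        intro e
        rw [Finset.sum_const, Finset.card_univ, Fintype.card_fin, nsmul_eq_mul]
      rw [Finset.sum_congr rfl (fun e _ => h1 e), ← Finset.mul_sum]
    have hdistsum : (∑ p : T.Dart × Fin m, ∑ q : T.Dart × Fin m,
        (T.dist p.1.fst q.1.fst : ℚ))
        = (m : ℚ) ^ 2 * (8 * W - 2 * n * (n - 1) - 2 * (n - 1) ^ 2) := by
      rw [Finset.sum_congr rfl
        (fun (p : T.Dart × Fin m) (_ : p ∈ Finset.univ) => inner p.1)]
      rw [Fintype.sum_prod_type]
      have h2 : ∀ d : T.Dart, (∑ _i : Fin m,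
          (m : ℚ) * (∑ e : T.Dart, (T.dist d.fst e.fst : ℚ)))
          = (m : ℚ) * ((m : ℚ) * ∑ e : T.Dart, (T.dist d.fst e.fst : ℚ)) := by
        intro d
        rw [Finset.sum_const, Finset.card_univ, Fintype.card_fin, nsmul_eq_mul]
      rw [Finset.sum_congr rfl (fun d _ => h2 d)]
      simp only [← Finset.mul_sum]
      rw [hQ]
      ring
    simp only [Finset.sum_sub_distrib, Finset.sum_add_distrib]
    rw [Finset.sum_congr rfl (fun p _ => hif p)]
    simp only [Finset.sum_const, Finset.card_univ, nsmul_eq_mul]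
    rw [hdistsum, hcardP]
    ring
  rw [wienerIndex]
  rw [Fintype.sum_sum_type]
  simp only [Fintype.sum_sum_type]
  rw [Finset.sum_add_distrib, Finset.sum_add_distrib]
  rw [S1, S2, S3, S4]
  ring
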